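/- arXiv:2303.11464 — 3 statements merged into one kernel-verified Lean document; each statement's English description precedes it below -/
import Mathlib

section
/- Let M be an n×n real matrix partitioned into an ℓ×ℓ array of blocks, δ ∈ ℕ^{ℓ×ℓ} a delay matrix with zero diagonal, and suppose max_{i,j} δ_{ij} ≤ κ ≤ κ'. Then every nonzero eigenvalue of the delayed iteration operator M^{(δ,κ)} is an eigenvalue of M^{(δ,κ')}, and conversely; in particular ρ(M^{(δ,κ)}) = ρ(M^{(δ,κ')}) provided ρ(M^{(δ,κ)}) > 0. -/
open Matrix

/-- Spectral radius of a complex matrix: sup of moduli of its spectrum. -/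
noncomputable def specRad {m : Type*} [Fintype m] [DecidableEq m] (A : Matrix m m ℂ) : ℝ :=
  sSup ((fun z : ℂ => ‖z‖) '' spectrum ℂ A)

/-- Delayed iteration operator `M^(δ,κ)` on the history space `ℝ^((κ+1)n)` (complexified).
The partition of `M` into `ℓ × ℓ` blocks is encoded by `p : Fin n → Fin ℓ` assigning each
row/column index to its block.  The history vector `v` stores `v (s, ·) = x^(κ - s)`,
and the operator maps `(x^(κ), …, x^(0))` to `(x^(κ+1), …, x^(1))` where
`x^(κ+1)_i = ∑_j M_{ij} x^(κ - δ_{ji})_j`. -/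
noncomputable def delayedOp (n ℓ κ : ℕ) (M : Matrix (Fin n) (Fin n) ℝ)
    (p : Fin n → Fin ℓ) (δ : Fin ℓ → Fin ℓ → ℕ) :
    Matrix (Fin (κ + 1) × Fin n) (Fin (κ + 1) × Fin n) ℂ :=
  fun st tb =>
    if st.1.val = 0 then
      (if tb.1.val = δ (p tb.2) (p st.2) then (M st.2 tb.2 : ℂ) else 0)
    else
      (if tb.1.val + 1 = st.1.val ∧ st.2 = tb.2 then 1 else 0)

lemma mem_spectrum_iff_exists_mulVec {m : Type*} [Fintype m] [DecidableEq m]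
    (A : Matrix m m ℂ) (μ : ℂ) :
    μ ∈ spectrum ℂ A ↔ ∃ v : m → ℂ, v ≠ 0 ∧ A.mulVec v = μ • v := by
  rw [spectrum.mem_iff, Matrix.isUnit_iff_isUnit_det, isUnit_iff_ne_zero, not_not,
    ← Matrix.exists_mulVec_eq_zero_iff]
  have key : ∀ v : m → ℂ, (algebraMap ℂ (Matrix m m ℂ) μ - A).mulVec v = μ • v - A.mulVec v := by
    intro v
    rw [Matrix.sub_mulVec, Algebra.algebraMap_eq_smul_one, Matrix.smul_mulVec,
      Matrix.one_mulVec]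
  constructor
  · rintro ⟨v, hv, h⟩
    exact ⟨v, hv, by rw [key v, sub_eq_zero] at h; exact h.symm⟩
  · rintro ⟨v, hv, h⟩
    exact ⟨v, hv, by rw [key v, h, sub_self]⟩

lemma delayedOp_mulVec (n ℓ κ : ℕ) (M : Matrix (Fin n) (Fin n) ℝ)
    (p : Fin n → Fin ℓ) (δ : Fin ℓ → Fin ℓ → ℕ) (hκ : ∀ i j, δ i j ≤ κ)
    (v : Fin (κ+1) × Fin n → ℂ) (s : Fin (κ+1)) (i : Fin n) :
    (delayedOp n ℓ κ M p δ).mulVec v (s, i) =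
      if s.val = 0 then
        ∑ j, (M i j : ℂ) * v (⟨δ (p j) (p i), Nat.lt_succ_of_le (hκ _ _)⟩, j)
      else v (⟨s.val - 1, by omega⟩, i) := by
  rcases Nat.eq_zero_or_pos s.val with h0 | hpos
  · rw [if_pos h0]
    unfold Matrix.mulVec dotProduct delayedOp
    simp only [h0, eq_self_iff_true, if_true]
    rw [Fintype.sum_prod_type, Finset.sum_comm]
    refine Finset.sum_congr rfl fun j _ => ?_
    rw [Finset.sum_eq_single (⟨δ (p j) (p i), Nat.lt_succ_of_le (hκ _ _)⟩ : Fin (κ+1))]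
    · rw [if_pos rfl]
    · intro t _ ht
      rw [if_neg (fun h => ht (Fin.ext h)), zero_mul]
    · intro h; exact absurd (Finset.mem_univ _) h
  · rw [if_neg (by omega)]
    unfold Matrix.mulVec dotProduct delayedOp
    simp only [if_neg (by omega : ¬ s.val = 0)]
    rw [Finset.sum_eq_single ((⟨s.val - 1, by omega⟩ : Fin (κ+1)), i)]
    · rw [if_pos ⟨by simp; omega, rfl⟩, one_mul]
    · intro tb _ htb
      rw [if_neg, zero_mul]
      rintro ⟨h1, h2⟩
      apply htb
      obtain ⟨t, j⟩ := tb
      simp only [Prod.mk.injEq]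
      exact ⟨Fin.ext (by simp at h1 ⊢; omega), h2.symm⟩
    · intro h; exact absurd (Finset.mem_univ _) h

lemma spectrum_delayedOp_iff (n ℓ κ : ℕ) (M : Matrix (Fin n) (Fin n) ℝ)
    (p : Fin n → Fin ℓ) (δ : Fin ℓ → Fin ℓ → ℕ) (hκ : ∀ i j, δ i j ≤ κ)
    (μ : ℂ) (hμ : μ ≠ 0) :
    μ ∈ spectrum ℂ (delayedOp n ℓ κ M p δ) ↔
      ∃ u : Fin n → ℂ, u ≠ 0 ∧
        ∀ i, ∑ j, (M i j : ℂ) * μ ^ (-(δ (p j) (p i) : ℤ)) * u j = μ * u i := by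
  rw [mem_spectrum_iff_exists_mulVec]
  constructor
  · rintro ⟨v, hv, hev⟩
    have claim : ∀ m : ℕ, ∀ h : m < κ + 1, ∀ i,
        v (⟨m, h⟩, i) = μ ^ (-(m : ℤ)) * v (⟨0, Nat.succ_pos κ⟩, i) := by
      intro m
      induction m with
      | zero => intro h i; simp
      | succ m ih =>
        intro h i
        have hprev : m < κ + 1 := by omega
        have hstep : v (⟨m, hprev⟩, i) = μ * v (⟨m + 1, h⟩, i) := by
          have := congrFun hev (⟨m + 1, h⟩, i)
          rw [delayedOp_mulVec n ℓ κ M p δ hκ] at this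
          rw [if_neg (Nat.succ_ne_zero m)] at this
          simpa using this
        have hv2 : v (⟨m + 1, h⟩, i) = μ⁻¹ * v (⟨m, hprev⟩, i) := by
          rw [hstep, inv_mul_cancel_left₀ hμ]
        rw [hv2, ih hprev i]
        rw [← mul_assoc]
        congr 1
        rw [← _root_.zpow_neg_one, ← zpow_add₀ hμ]
        congr 1
        push_cast
        ring
    set z : Fin (κ+1) := ⟨0, Nat.succ_pos κ⟩ with hz
    refine ⟨fun i => v (z, i), ?_, ?_⟩
    · intro hu0
      apply hv
      funext sb
      obtain ⟨s, i⟩ := sb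
      have := claim s.val s.isLt i
      rw [show (⟨s.val, s.isLt⟩ : Fin (κ+1)) = s from Fin.ext rfl] at this
      rw [this, show v (z, i) = 0 from congrFun hu0 i, mul_zero, Pi.zero_apply]
    · intro i
      have := congrFun hev (z, i)
      rw [delayedOp_mulVec n ℓ κ M p δ hκ] at this
      rw [if_pos rfl] at this
      simp only [Pi.smul_apply, smul_eq_mul] at this
      rw [← this]
      refine Finset.sum_congr rfl fun j _ => ?_
      rw [claim (δ (p j) (p i)) (Nat.lt_succ_of_le (hκ _ _)) j, mul_assoc]
  · rintro ⟨u, hu, heq⟩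
    refine ⟨fun sb => μ ^ (-(sb.1.val : ℤ)) * u sb.2, ?_, ?_⟩
    · obtain ⟨i, hi⟩ := Function.ne_iff.mp hu
      intro h0
      apply hi
      have := congrFun h0 (⟨0, Nat.succ_pos κ⟩, i)
      simpa using this
    · funext sb
      obtain ⟨s, i⟩ := sb
      rw [delayedOp_mulVec n ℓ κ M p δ hκ]
      simp only [Pi.smul_apply, smul_eq_mul]
      rcases Nat.eq_zero_or_pos s.val with h0 | hpos
      · rw [if_pos h0]
        simp only [h0]
        rw [show ((0:ℕ):ℤ) = 0 from rfl]
        simp only [neg_zero, zpow_zero, one_mul]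
        rw [← heq i]
        refine Finset.sum_congr rfl fun j _ => ?_
        ring
      · rw [if_neg (by omega)]
        obtain ⟨m, hm⟩ : ∃ m, s.val = m + 1 := ⟨s.val - 1, by omega⟩
        rw [hm]
        simp only [Nat.add_sub_cancel]
        rw [← mul_assoc]
        congr 1
        have harith : (-(m : ℤ)) = 1 + (-((m + 1 : ℕ) : ℤ)) := by push_cast; ring
        rw [harith, zpow_add₀ hμ, zpow_one]

/-- The nonzero spectrum of the delayed operator is independent of the history length:
for max delta <= k <= k', the operators share nonzero eigenvalues, hence the same
spectral radius whenever it is positive. -/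
theorem delayed_spectrum_indep_history (n ℓ κ κ' : ℕ) (M : Matrix (Fin n) (Fin n) ℝ)
    (p : Fin n → Fin ℓ) (δ : Fin ℓ → Fin ℓ → ℕ)
    (hδ0 : ∀ i, δ i i = 0) (hκ : ∀ i j, δ i j ≤ κ) (hκκ' : κ ≤ κ') :
    (∀ μ : ℂ, μ ≠ 0 →
      (μ ∈ spectrum ℂ (delayedOp n ℓ κ M p δ) ↔ μ ∈ spectrum ℂ (delayedOp n ℓ κ' M p δ))) ∧
    (0 < specRad (delayedOp n ℓ κ M p δ) →
      specRad (delayedOp n ℓ κ M p δ) = specRad (delayedOp n ℓ κ' M p δ)) := by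
  have hκ' : ∀ i j, δ i j ≤ κ' := fun i j => (hκ i j).trans hκκ'
  set A := delayedOp n ℓ κ M p δ with hA
  set A' := delayedOp n ℓ κ' M p δ with hA'
  have hiff : ∀ μ : ℂ, μ ≠ 0 → (μ ∈ spectrum ℂ A ↔ μ ∈ spectrum ℂ A') := by
    intro μ hμ
    rw [hA, hA', spectrum_delayedOp_iff n ℓ κ M p δ hκ μ hμ,
      spectrum_delayedOp_iff n ℓ κ' M p δ hκ' μ hμ]
  refine ⟨hiff, ?_⟩
  intro hpos
  have hfinS : ((fun z : ℂ => ‖z‖) '' spectrum ℂ A).Finite := (Matrix.finite_spectrum A).image _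
  have hfinT : ((fun z : ℂ => ‖z‖) '' spectrum ℂ A').Finite := (Matrix.finite_spectrum A').image _
  have hneS : ((fun z : ℂ => ‖z‖) '' spectrum ℂ A).Nonempty := by
    by_contra h
    rw [Set.not_nonempty_iff_eq_empty] at h
    rw [specRad, h, Real.sSup_empty] at hpos
    exact lt_irrefl 0 hpos
  obtain ⟨μ, hμA, hμabs⟩ := hneS.csSup_mem hfinS
  have hμ0 : μ ≠ 0 := by
    intro h
    simp only [h, norm_zero] at hμabs
    rw [specRad, ← hμabs] at hpos
    exact lt_irrefl 0 hpos
  have hμA' : μ ∈ spectrum ℂ A' := (hiff μ hμ0).mp hμA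
  have hle1 : specRad A ≤ specRad A' := by
    rw [specRad, ← hμabs]
    exact le_csSup hfinT.bddAbove ⟨μ, hμA', rfl⟩
  have hneT : ((fun z : ℂ => ‖z‖) '' spectrum ℂ A').Nonempty := ⟨‖μ‖, μ, hμA', rfl⟩
  obtain ⟨ν, hνA', hνabs⟩ := hneT.csSup_mem hfinT
  have hle2 : specRad A' ≤ specRad A := by
    rcases eq_or_ne ν 0 with h0 | h0
    · rw [specRad, ← hνabs, h0]; simp only [norm_zero]
      exact le_of_lt hpos
    · have : ν ∈ spectrum ℂ A := (hiff ν h0).mpr hνA'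
      rw [specRad, ← hνabs, specRad]
      exact le_csSup hfinS.bddAbove ⟨ν, this, rfl⟩
  exact le_antisymm hle1 hle2
end

section
/- Let M be an n×n real matrix partitioned into an ℓ×ℓ array of blocks, and let δ ∈ ℕ^{ℓ×ℓ} satisfy δ_{ij} = k for every pair (i,j) such that the block M_{ij} is nonzero (with δ_{ii}=0, so diagonal blocks are zero when k ≥ 1). Then μ is a nonzero eigenvalue of the delayed iteration operator M^{(δ,κ)} (for κ ≥ k) if and only if μ^{k+1} is a nonzero eigenvalue of M. Consequently ρ(M^{(δ,κ)}) = ρ(M)^{1/(k+1)} when ρ(M) > 0. -/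
open Matrix

/-- Eigenvector characterization of matrix spectrum over ℂ. -/
lemma mem_spectrum_iff_exists_vec {m : Type*} [Fintype m] [DecidableEq m]
    (A : Matrix m m ℂ) (μ : ℂ) :
    μ ∈ spectrum ℂ A ↔ ∃ v, v ≠ 0 ∧ A *ᵥ v = μ • v := by
  have halg : ∀ v : m → ℂ, (algebraMap ℂ (Matrix m m ℂ) μ) *ᵥ v = μ • v := by
    intro v
    rw [Matrix.algebraMap_eq_diagonal]
    ext i
    simp [Matrix.mulVec_diagonal]
  rw [spectrum.mem_iff, Matrix.isUnit_iff_isUnit_det, isUnit_iff_ne_zero, not_not,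
    ← Matrix.exists_mulVec_eq_zero_iff]
  constructor
  · rintro ⟨v, hv, h⟩
    refine ⟨v, hv, ?_⟩
    rw [Matrix.sub_mulVec, halg] at h
    exact (sub_eq_zero.mp h).symm
  · rintro ⟨v, hv, h⟩
    exact ⟨v, hv, by rw [Matrix.sub_mulVec, halg, h, sub_self]⟩

lemma delayedOp_mulVec_zero {n ℓ κ : ℕ} {M : Matrix (Fin n) (Fin n) ℝ}
    {p : Fin n → Fin ℓ} {δ : Fin ℓ → Fin ℓ → ℕ} (hκδ : ∀ i j, δ i j ≤ κ)
    (v : Fin (κ+1) × Fin n → ℂ) (s : Fin (κ+1)) (hs : (s:ℕ) = 0) (i : Fin n) :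
    (delayedOp n ℓ κ M p δ *ᵥ v) (s, i)
      = ∑ b, (M i b : ℂ) * v (⟨δ (p b) (p i), Nat.lt_succ_of_le (hκδ _ _)⟩, b) := by
  simp only [Matrix.mulVec, dotProduct, delayedOp, hs, if_pos rfl, eq_self_iff_true,
    if_true]
  rw [Fintype.sum_prod_type, Finset.sum_comm]
  refine Finset.sum_congr rfl fun b _ => ?_
  rw [Finset.sum_eq_single (⟨δ (p b) (p i), Nat.lt_succ_of_le (hκδ _ _)⟩ : Fin (κ+1))]
  · simp
  · intro t _ ht
    rw [if_neg, zero_mul]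
    intro h
    exact ht (Fin.ext h)
  · intro h; exact absurd (Finset.mem_univ _) h

lemma delayedOp_mulVec_succ {n ℓ κ : ℕ} {M : Matrix (Fin n) (Fin n) ℝ}
    {p : Fin n → Fin ℓ} {δ : Fin ℓ → Fin ℓ → ℕ}
    (v : Fin (κ+1) × Fin n → ℂ) (s : Fin (κ+1)) (u : ℕ) (hs : (s:ℕ) = u + 1) (i : Fin n) :
    (delayedOp n ℓ κ M p δ *ᵥ v) (s, i)
      = v (⟨u, lt_trans (Nat.lt_of_succ_le (le_of_eq hs.symm)) s.2⟩, i) := by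
  have hu : u < κ + 1 := lt_trans (Nat.lt_of_succ_le (le_of_eq hs.symm)) s.2
  simp only [Matrix.mulVec, dotProduct, delayedOp, hs, Nat.succ_ne_zero, if_false,
    ite_false]
  rw [Finset.sum_eq_single ((⟨u, hu⟩, i) : Fin (κ+1) × Fin n)]
  · simp
  · intro tb _ htb
    rw [if_neg, zero_mul]
    rintro ⟨h1, h2⟩
    have h3 : tb.1 = (⟨u, hu⟩ : Fin (κ+1)) := Fin.ext (by simpa using h1)
    exact htb (Prod.ext h3 h2.symm)
  · intro h; exact absurd (Finset.mem_univ _) h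

/-- Uniform delays: if the delay used with every nonzero block of M equals k, then mu /= 0
is an eigenvalue of the delayed operator iff mu^(k+1) is an eigenvalue of M; consequently
rho(delayed) = rho(M)^(1/(k+1)) when rho(M) > 0. -/
theorem uniform_delay_spectrum (n ℓ κ k : ℕ) (M : Matrix (Fin n) (Fin n) ℝ)
    (p : Fin n → Fin ℓ) (δ : Fin ℓ → Fin ℓ → ℕ)
    (hδ0 : ∀ i, δ i i = 0)
    (hunif : ∀ a b : Fin n, M a b ≠ 0 → δ (p b) (p a) = k)
    (hκ : k ≤ κ) (hκδ : ∀ i j, δ i j ≤ κ) :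
    (∀ μ : ℂ, μ ≠ 0 →
      (μ ∈ spectrum ℂ (delayedOp n ℓ κ M p δ) ↔
        μ ^ (k + 1) ∈ spectrum ℂ (M.map (Complex.ofReal)))) ∧
    (0 < specRad (M.map (Complex.ofReal)) →
      specRad (delayedOp n ℓ κ M p δ)
        = specRad (M.map (Complex.ofReal)) ^ ((1 : ℝ) / (k + 1))) := by
  have hk1 : k < κ + 1 := Nat.lt_succ_of_le hκ
  have h0 : (0:ℕ) < κ + 1 := Nat.succ_pos _
  have key : ∀ μ : ℂ, μ ≠ 0 →
      (μ ∈ spectrum ℂ (delayedOp n ℓ κ M p δ) ↔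
        μ ^ (k + 1) ∈ spectrum ℂ (M.map (Complex.ofReal))) := by
    intro μ hμ
    rw [mem_spectrum_iff_exists_vec, mem_spectrum_iff_exists_vec]
    constructor
    · rintro ⟨v, hv, hDv⟩
      have heq : ∀ st, (delayedOp n ℓ κ M p δ *ᵥ v) st = μ * v st := fun st => by
        rw [hDv, Pi.smul_apply, smul_eq_mul]
      have hrec : ∀ u : ℕ, ∀ hu : u < κ + 1, ∀ i : Fin n,
          μ ^ u * v (⟨u, hu⟩, i) = v (⟨0, h0⟩, i) := by
        intro u
        induction u with
        | zero => intro hu i; simp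
        | succ u ih =>
          intro hu i
          have hu' : u < κ + 1 := Nat.lt_of_succ_lt hu
          have h1 := heq (⟨u+1, hu⟩, i)
          rw [delayedOp_mulVec_succ v ⟨u+1, hu⟩ u rfl i] at h1
          calc μ ^ (u+1) * v (⟨u+1, hu⟩, i)
              = μ ^ u * (μ * v (⟨u+1, hu⟩, i)) := by ring
            _ = μ ^ u * v (⟨u, hu'⟩, i) := by rw [← h1]
            _ = v (⟨0, h0⟩, i) := ih hu' i
      refine ⟨fun i => v (⟨0, h0⟩, i), ?_, ?_⟩
      · intro hx
        apply hv
        funext st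
        have h := hrec st.1.val st.1.2 st.2
        simp only [Fin.eta, Prod.mk.eta] at h
        have hxz : v (⟨0, h0⟩, st.2) = 0 := congrFun hx st.2
        have hz : μ ^ (st.1:ℕ) * v st = 0 := by rw [h]; exact hxz
        have := (mul_eq_zero.mp hz).resolve_left (pow_ne_zero _ hμ)
        simpa using this
      · funext i
        have h1 := heq (⟨0, h0⟩, i)
        rw [delayedOp_mulVec_zero hκδ v ⟨0, h0⟩ rfl i] at h1
        have h1' : ∑ b, (M i b : ℂ) * v (⟨k, hk1⟩, b) = μ * v (⟨0, h0⟩, i) := by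
          rw [← h1]
          refine Finset.sum_congr rfl fun b _ => ?_
          by_cases hMb : M i b = 0
          · simp [hMb]
          · have hfe : (⟨k, hk1⟩ : Fin (κ+1))
                = ⟨δ (p b) (p i), Nat.lt_succ_of_le (hκδ _ _)⟩ :=
              Fin.ext (by simp [hunif i b hMb])
            rw [hfe]
        have hcalc : ((M.map (Complex.ofReal)) *ᵥ fun b => v (⟨0, h0⟩, b)) i
            = μ ^ k * ∑ b, (M i b : ℂ) * v (⟨k, hk1⟩, b) := by
          simp only [Matrix.mulVec, dotProduct, Matrix.map_apply, Finset.mul_sum]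
          refine Finset.sum_congr rfl fun b _ => ?_
          rw [← hrec k hk1 b]
          ring
        rw [Pi.smul_apply, smul_eq_mul, hcalc, h1']
        ring
    · rintro ⟨x, hx, hAx⟩
      refine ⟨fun st => μ ^ (κ - (st.1:ℕ)) * x st.2, ?_, ?_⟩
      · intro hv0
        apply hx
        funext i
        have h := congrFun hv0 (⟨κ, Nat.lt_succ_self κ⟩, i)
        simpa [Nat.sub_self] using h
      · have hAx' : ∀ i, ∑ b, (M i b : ℂ) * x b = μ ^ (k+1) * x i := by
          intro i
          have := congrFun hAx i
          simpa [Matrix.mulVec, dotProduct, Matrix.map_apply] using this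
        funext st
        obtain ⟨s, i⟩ := st
        rcases hs : (s:ℕ) with _ | u
        · rw [delayedOp_mulVec_zero hκδ _ s hs i]
          have hsum : ∑ b, (M i b : ℂ) *
              ((fun st : Fin (κ+1) × Fin n => μ ^ (κ - (st.1:ℕ)) * x st.2)
                (⟨δ (p b) (p i), Nat.lt_succ_of_le (hκδ _ _)⟩, b))
              = μ ^ (κ - k) * ∑ b, (M i b : ℂ) * x b := by
            rw [Finset.mul_sum]
            refine Finset.sum_congr rfl fun b _ => ?_
            by_cases hMb : M i b = 0
            · simp [hMb]
            · simp only [hunif i b hMb]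
              ring
          rw [hsum, hAx' i]
          have hs0 : (s:ℕ) = 0 := hs
          simp only [Pi.smul_apply, smul_eq_mul, hs0, Nat.sub_zero]
          rw [← mul_assoc, ← pow_add, ← mul_assoc, ← pow_succ']
          congr 2
          omega
        · rw [delayedOp_mulVec_succ _ s u hs i]
          have hsle : u + 1 ≤ κ := by have := s.2; omega
          simp only [Pi.smul_apply, smul_eq_mul, hs]
          have hκu : κ - u = (κ - (u+1)) + 1 := by omega
          rw [hκu, pow_succ]
          ring
  refine ⟨key, ?_⟩
  intro hρ
  set A := M.map (Complex.ofReal) with hAdef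
  have hfinM : ((fun z : ℂ => ‖z‖) '' spectrum ℂ A).Finite := (Matrix.finite_spectrum A).image _
  have hfinD : ((fun z : ℂ => ‖z‖) '' spectrum ℂ (delayedOp n ℓ κ M p δ)).Finite :=
    (Matrix.finite_spectrum _).image _
  have hNeM : ((fun z : ℂ => ‖z‖) '' spectrum ℂ A).Nonempty := by
    by_contra h
    rw [Set.not_nonempty_iff_eq_empty] at h
    rw [specRad, h, Real.sSup_empty] at hρ
    exact lt_irrefl 0 hρ
  have hmem : specRad A ∈ (fun z : ℂ => ‖z‖) '' spectrum ℂ A := hNeM.csSup_mem hfinM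
  obtain ⟨lam, hlamS, hlam⟩ := hmem
  have hlam0 : lam ≠ 0 := by
    intro h
    rw [h] at hlam
    simp only [norm_zero] at hlam
    rw [← hlam] at hρ
    exact lt_irrefl 0 hρ
  obtain ⟨μ, hμpow⟩ := IsAlgClosed.exists_pow_nat_eq lam (Nat.succ_pos k)
  have hμ0 : μ ≠ 0 := by
    intro h
    apply hlam0
    rw [← hμpow, h, zero_pow (Nat.succ_ne_zero k)]
  have hμD : μ ∈ spectrum ℂ (delayedOp n ℓ κ M p δ) :=
    (key μ hμ0).mpr (by rw [hμpow]; exact hlamS)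
  have habs : ‖μ‖ ^ (k+1) = specRad A := by
    rw [← hlam, ← hμpow]
    simp [norm_pow]
  have hrpow : ∀ r : ℝ, 0 ≤ r → ((r ^ (k+1) : ℝ)) ^ ((1:ℝ)/(k+1)) = r := by
    intro r hr
    rw [← Real.rpow_natCast r (k+1), ← Real.rpow_mul hr]
    rw [show ((k+1:ℕ):ℝ) * ((1:ℝ)/((k:ℝ)+1)) = 1 by push_cast; field_simp, Real.rpow_one]
  have hμabs : ‖μ‖ = specRad A ^ ((1:ℝ)/((k:ℝ)+1)) := by
    rw [← habs, hrpow _ (norm_nonneg _)]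
  have upper : ∀ r ∈ (fun z : ℂ => ‖z‖) '' spectrum ℂ (delayedOp n ℓ κ M p δ),
      r ≤ specRad A ^ ((1:ℝ)/((k:ℝ)+1)) := by
    rintro r ⟨ν, hν, rfl⟩
    by_cases hν0 : ν = 0
    · subst hν0
      simp only [norm_zero]
      exact le_of_lt (Real.rpow_pos_of_pos hρ _)
    · have h1 : ν ^ (k+1) ∈ spectrum ℂ A := (key ν hν0).mp hν
      have h2 : ‖ν‖ ^ (k+1) ≤ specRad A := by
        rw [← norm_pow]
        exact le_csSup hfinM.bddAbove ⟨_, h1, rfl⟩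
      show ‖ν‖ ≤ _
      calc ‖ν‖
          = (‖ν‖ ^ (k+1)) ^ ((1:ℝ)/((k:ℝ)+1)) :=
            (hrpow _ (norm_nonneg _)).symm
        _ ≤ specRad A ^ ((1:ℝ)/((k:ℝ)+1)) :=
            Real.rpow_le_rpow (by positivity) h2 (by positivity)
  show specRad (delayedOp n ℓ κ M p δ) = specRad A ^ ((1:ℝ)/((k:ℝ)+1))
  rw [specRad]
  apply le_antisymm
  · exact csSup_le ⟨‖μ‖, ⟨μ, hμD, rfl⟩⟩ upper
  · rw [← hμabs]
    exact le_csSup hfinD.bddAbove ⟨μ, hμD, rfl⟩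
end

section
/- Let M be an n×n real matrix with 0 < ρ(M) < 1, partitioned into blocks, and let δ be a delay matrix with all delays on nonzero blocks equal to k ≥ 1. Then ρ(M) < ρ(M^{(δ)}) < 1; that is, the uniformly delayed iteration still converges, but strictly slower than the synchronous iteration. -/
open Matrix

lemma mem_spectrum_iff_eig {m : Type*} [Fintype m] [DecidableEq m] (A : Matrix m m ℂ) (μ : ℂ) :
    μ ∈ spectrum ℂ A ↔ ∃ v, v ≠ 0 ∧ A.mulVec v = μ • v := by
  rw [spectrum.mem_iff, Matrix.isUnit_iff_isUnit_det, isUnit_iff_ne_zero, not_not,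
    ← Matrix.exists_mulVec_eq_zero_iff]
  have key : ∀ v, (algebraMap ℂ (Matrix m m ℂ) μ - A).mulVec v = μ • v - A.mulVec v := by
    intro v
    rw [Matrix.sub_mulVec, Algebra.algebraMap_eq_smul_one, Matrix.smul_mulVec,
      Matrix.one_mulVec]
  constructor
  · rintro ⟨v, hv, h⟩
    exact ⟨v, hv, by rw [key, sub_eq_zero] at h; exact h.symm⟩
  · rintro ⟨v, hv, h⟩
    exact ⟨v, hv, by rw [key, sub_eq_zero, h]⟩

lemma sum_if_val {κ : ℕ} (d : ℕ) (hd : d < κ + 1) (c : ℂ) (f : Fin (κ + 1) → ℂ) :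
    ∑ t : Fin (κ + 1), (if (t : ℕ) = d then c else 0) * f t = c * f ⟨d, hd⟩ := by
  rw [Finset.sum_eq_single (⟨d, hd⟩ : Fin (κ + 1))]
  · simp
  · intro t _ ht
    rw [if_neg, zero_mul]
    exact fun h => ht (Fin.ext h)
  · simp

lemma mulVec_delayed_zero {n ℓ κ : ℕ} (M : Matrix (Fin n) (Fin n) ℝ)
    (p : Fin n → Fin ℓ) (δ : Fin ℓ → Fin ℓ → ℕ) (hκδ : ∀ i j, δ i j ≤ κ)
    (v : Fin (κ + 1) × Fin n → ℂ) (i : Fin n) :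
    (delayedOp n ℓ κ M p δ).mulVec v (⟨0, κ.succ_pos⟩, i)
      = ∑ j, (M i j : ℂ) * v (⟨δ (p j) (p i), Nat.lt_succ_of_le (hκδ _ _)⟩, j) := by
  unfold delayedOp Matrix.mulVec dotProduct
  rw [Fintype.sum_prod_type_right]
  refine Finset.sum_congr rfl fun j _ => ?_
  simp only [if_pos rfl]
  exact sum_if_val _ _ _ _

lemma mulVec_delayed_succ {n ℓ κ : ℕ} (M : Matrix (Fin n) (Fin n) ℝ)
    (p : Fin n → Fin ℓ) (δ : Fin ℓ → Fin ℓ → ℕ)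
    (v : Fin (κ + 1) × Fin n → ℂ) (s : Fin (κ + 1)) (hs : (s : ℕ) ≠ 0) (i : Fin n) :
    (delayedOp n ℓ κ M p δ).mulVec v (s, i)
      = v (⟨(s : ℕ) - 1, lt_trans (Nat.sub_lt (Nat.pos_of_ne_zero hs) one_pos) s.isLt⟩, i) := by
  unfold delayedOp Matrix.mulVec dotProduct
  simp only [if_neg hs]
  rw [Finset.sum_eq_single ((⟨(s : ℕ) - 1, lt_trans (Nat.sub_lt (Nat.pos_of_ne_zero hs) one_pos) s.isLt⟩ : Fin (κ + 1)), i)]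
  · rw [if_pos ⟨Nat.succ_pred_eq_of_pos (Nat.pos_of_ne_zero hs), rfl⟩, one_mul]
  · intro tb _ htb
    rw [if_neg, zero_mul]
    rintro ⟨h1, h2⟩
    apply htb
    have h1' : (tb.1 : ℕ) = (s : ℕ) - 1 := by omega
    exact Prod.ext (Fin.ext h1') h2.symm
  · simp

lemma spec_corr {n ℓ κ k : ℕ} (M : Matrix (Fin n) (Fin n) ℝ)
    (p : Fin n → Fin ℓ) (δ : Fin ℓ → Fin ℓ → ℕ)
    (hunif : ∀ a b : Fin n, M a b ≠ 0 → δ (p b) (p a) = k)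
    (hκ : k ≤ κ) (hκδ : ∀ i j, δ i j ≤ κ) (lam : ℂ) (hlam : lam ≠ 0) :
    lam ∈ spectrum ℂ (delayedOp n ℓ κ M p δ) ↔
      lam ^ (k + 1) ∈ spectrum ℂ (M.map Complex.ofReal) := by
  rw [mem_spectrum_iff_eig, mem_spectrum_iff_eig]
  constructor
  · rintro ⟨v, hv, hev⟩
    have hshift : ∀ (s : Fin (κ + 1)) (hs : (s : ℕ) ≠ 0) (i : Fin n),
        lam * v (s, i) = v (⟨(s : ℕ) - 1,
          lt_trans (Nat.sub_lt (Nat.pos_of_ne_zero hs) one_pos) s.isLt⟩, i) := by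
      intro s hs i
      have := congrFun hev (s, i)
      rw [mulVec_delayed_succ M p δ v s hs i] at this
      simpa [mul_comm] using this.symm
    have hstep : ∀ (m : ℕ) (hm : m < κ + 1) (i : Fin n),
        lam ^ m * v (⟨m, hm⟩, i) = v (⟨0, κ.succ_pos⟩, i) := by
      intro m
      induction m with
      | zero => intro hm i; simp
      | succ m ih =>
        intro hm i
        have hm' : m < κ + 1 := by omega
        have h1 := hshift ⟨m + 1, hm⟩ (by simp) i
        have h2 : v (⟨(((⟨m + 1, hm⟩ : Fin (κ + 1)) : ℕ)) - 1,
            lt_trans (Nat.sub_lt (Nat.pos_of_ne_zero (by simp)) one_pos)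
              (⟨m + 1, hm⟩ : Fin (κ + 1)).isLt⟩, i) = v (⟨m, hm'⟩, i) := rfl
        calc lam ^ (m + 1) * v (⟨m + 1, hm⟩, i)
            = lam ^ m * (lam * v (⟨m + 1, hm⟩, i)) := by ring
          _ = lam ^ m * v (⟨m, hm'⟩, i) := by rw [h1, h2]
          _ = v (⟨0, κ.succ_pos⟩, i) := ih hm' i
    refine ⟨fun j => v (⟨0, κ.succ_pos⟩, j), ?_, ?_⟩
    · intro h
      obtain ⟨⟨s, j⟩, hsj⟩ := Function.ne_iff.mp hv
      apply hsj
      have h0 : v (⟨0, κ.succ_pos⟩, j) = 0 := congrFun h j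
      have hst := hstep (s : ℕ) s.isLt j
      rw [Fin.eta, h0] at hst
      exact (mul_eq_zero.mp hst).resolve_left (pow_ne_zero _ hlam)
    · funext i
      have h0 := congrFun hev (⟨0, κ.succ_pos⟩, i)
      rw [mulVec_delayed_zero M p δ hκδ v i] at h0
      simp only [Pi.smul_apply, smul_eq_mul] at h0
      have h2 : ∀ j : Fin n,
          lam ^ k * ((M i j : ℂ) * v (⟨δ (p j) (p i), Nat.lt_succ_of_le (hκδ _ _)⟩, j))
            = (M i j : ℂ) * v (⟨0, κ.succ_pos⟩, j) := by
        intro j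
        by_cases hMij : M i j = 0
        · simp [hMij]
        · have hd : δ (p j) (p i) = k := hunif i j hMij
          have he : v (⟨δ (p j) (p i), Nat.lt_succ_of_le (hκδ _ _)⟩, j)
              = v (⟨k, Nat.lt_succ_of_le hκ⟩, j) := by
            congr 1
            exact Prod.ext (Fin.ext hd) rfl
          rw [he, ← hstep k (Nat.lt_succ_of_le hκ) j]
          ring
      show (M.map Complex.ofReal).mulVec (fun j => v (⟨0, κ.succ_pos⟩, j)) i
          = (lam ^ (k + 1) • fun j => v (⟨0, κ.succ_pos⟩, j)) i
      calc (M.map Complex.ofReal).mulVec (fun j => v (⟨0, κ.succ_pos⟩, j)) i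
          = ∑ j, (M i j : ℂ) * v (⟨0, κ.succ_pos⟩, j) := by
            simp [Matrix.mulVec, dotProduct, Matrix.map_apply]
        _ = ∑ j, lam ^ k * ((M i j : ℂ)
              * v (⟨δ (p j) (p i), Nat.lt_succ_of_le (hκδ _ _)⟩, j)) :=
            (Finset.sum_congr rfl fun j _ => h2 j).symm
        _ = lam ^ k * ∑ j, (M i j : ℂ)
              * v (⟨δ (p j) (p i), Nat.lt_succ_of_le (hκδ _ _)⟩, j) :=
            (Finset.mul_sum _ _ _).symm
        _ = lam ^ k * (lam * v (⟨0, κ.succ_pos⟩, i)) := by rw [h0]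
        _ = (lam ^ (k + 1) • fun j => v (⟨0, κ.succ_pos⟩, j)) i := by
            simp only [Pi.smul_apply, smul_eq_mul]; ring
  · rintro ⟨w, hw, hew⟩
    refine ⟨fun sj => lam ^ (κ - (sj.1 : ℕ)) * w sj.2, ?_, ?_⟩
    · intro h
      obtain ⟨j, hj⟩ := Function.ne_iff.mp hw
      apply hj
      have h0 : lam ^ (κ - ((⟨0, κ.succ_pos⟩ : Fin (κ + 1)) : ℕ)) * w j = 0 :=
        congrFun h (⟨0, κ.succ_pos⟩, j)
      exact (mul_eq_zero.mp h0).resolve_left (pow_ne_zero _ hlam)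
    · set v : Fin (κ + 1) × Fin n → ℂ := fun sj => lam ^ (κ - (sj.1 : ℕ)) * w sj.2 with hvdef
      funext ⟨s, i⟩
      rw [Pi.smul_apply, smul_eq_mul]
      by_cases hs : (s : ℕ) = 0
      · have hseq : s = ⟨0, κ.succ_pos⟩ := Fin.ext hs
        subst hseq
        rw [mulVec_delayed_zero M p δ hκδ v i]
        have h2 : ∀ j : Fin n,
            (M i j : ℂ) * v (⟨δ (p j) (p i), Nat.lt_succ_of_le (hκδ _ _)⟩, j)
              = lam ^ (κ - k) * ((M i j : ℂ) * w j) := by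
          intro j
          by_cases hMij : M i j = 0
          · simp [hMij]
          · have hd : δ (p j) (p i) = k := hunif i j hMij
            simp only [hvdef]
            rw [hd]
            ring
        rw [Finset.sum_congr rfl fun j _ => h2 j, ← Finset.mul_sum]
        have hAw : ∑ j, (M i j : ℂ) * w j = lam ^ (k + 1) * w i := by
          have := congrFun hew i
          simpa [Matrix.mulVec, dotProduct, Matrix.map_apply] using this
        rw [hAw]
        have hvv : v (⟨0, κ.succ_pos⟩, i) = lam ^ κ * w i := by
          simp [hvdef]
        rw [hvv]
        rw [show lam ^ (κ - k) * (lam ^ (k + 1) * w i) = lam ^ (κ - k + (k + 1)) * w i by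
          rw [pow_add]; ring]
        rw [show κ - k + (k + 1) = κ + 1 by omega, pow_succ]
        ring
      · rw [mulVec_delayed_succ M p δ v s hs i]
        have hA : v (⟨(s : ℕ) - 1,
            lt_trans (Nat.sub_lt (Nat.pos_of_ne_zero hs) one_pos) s.isLt⟩, i)
              = lam ^ (κ - ((s : ℕ) - 1)) * w i := rfl
        have hB : v (s, i) = lam ^ (κ - (s : ℕ)) * w i := rfl
        rw [hA, hB]
        rw [show κ - ((s : ℕ) - 1) = (κ - (s : ℕ)) + 1 by have := s.isLt; omega, pow_succ]
        ring


/-- Price of asynchrony: with 0 < rho(M) < 1 and uniform delay k >= 1 on nonzero blocks,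
rho(M) < rho(delayed) < 1. -/
theorem uniform_delay_price (n ℓ κ k : ℕ) (M : Matrix (Fin n) (Fin n) ℝ)
    (p : Fin n → Fin ℓ) (δ : Fin ℓ → Fin ℓ → ℕ)
    (hδ0 : ∀ i, δ i i = 0)
    (hunif : ∀ a b : Fin n, M a b ≠ 0 → δ (p b) (p a) = k)
    (hk : 1 ≤ k) (hκ : k ≤ κ) (hκδ : ∀ i j, δ i j ≤ κ)
    (hρ0 : 0 < specRad (M.map (Complex.ofReal)))
    (hρ1 : specRad (M.map (Complex.ofReal)) < 1) :
    specRad (M.map (Complex.ofReal)) < specRad (delayedOp n ℓ κ M p δ) ∧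
      specRad (delayedOp n ℓ κ M p δ) < 1 := by
  set A := M.map (Complex.ofReal) with hA
  set B := delayedOp n ℓ κ M p δ with hB
  set r := specRad A with hr
  -- the set S of moduli of the spectrum of A
  set S : Set ℝ := (fun z : ℂ => ‖z‖) '' spectrum ℂ A with hS
  have hSfin : S.Finite := (Matrix.finite_spectrum A).image _
  have hSne : S.Nonempty := by
    by_contra h
    rw [Set.not_nonempty_iff_eq_empty] at h
    rw [hr, specRad, ← hS, h, Real.sSup_empty] at hρ0
    exact lt_irrefl 0 hρ0
  have hrS : r ∈ S := hSne.csSup_mem hSfin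
  obtain ⟨μ, hμmem, hμabs⟩ := hrS
  have hμne : μ ≠ 0 := by
    intro h
    rw [h] at hμabs
    simp at hμabs
    rw [← hμabs] at hρ0
    exact lt_irrefl 0 hρ0
  -- a (k+1)-st root of μ
  obtain ⟨lam, hlam⟩ := IsAlgClosed.exists_pow_nat_eq μ (n := k + 1) k.succ_pos
  have hlamne : lam ≠ 0 := by
    intro h
    rw [h] at hlam
    simp at hlam
    exact hμne hlam.symm
  have hlamB : lam ∈ spectrum ℂ B :=
    (spec_corr M p δ hunif hκ hκδ lam hlamne).mpr (by rw [hlam]; exact hμmem)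
  have hlamabs : ‖lam‖ ^ (k + 1) = r := by
    rw [← hμabs, ← hlam]; simp [norm_pow]
  -- moduli of spectrum of B
  set T : Set ℝ := (fun z : ℂ => ‖z‖) '' spectrum ℂ B with hT
  have hTfin : T.Finite := (Matrix.finite_spectrum B).image _
  have hlamT : ‖lam‖ ∈ T := ⟨lam, hlamB, rfl⟩
  have hTne : T.Nonempty := ⟨_, hlamT⟩
  have hBge : ‖lam‖ ≤ specRad B := le_csSup hTfin.bddAbove hlamT
  have hrlam : r < ‖lam‖ := by
    by_contra h
    push_neg at h
    have h1 : ‖lam‖ ^ (k + 1) ≤ r ^ (k + 1) :=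
      pow_le_pow_left₀ (norm_nonneg lam) h (k + 1)
    have h2 : r ^ (k + 1) < r ^ 1 := by
      apply pow_lt_pow_right_of_lt_one₀ hρ0 hρ1
      omega
    rw [pow_one] at h2
    rw [hlamabs] at h1
    exact lt_irrefl r (lt_of_le_of_lt h1 h2)
  constructor
  · exact lt_of_lt_of_le hrlam hBge
  · -- every element of T is < 1
    have hTlt : ∀ x ∈ T, x < 1 := by
      rintro x ⟨ν, hν, rfl⟩
      by_cases hν0 : ν = 0
      · simp [hν0]
      · have hν1 : ν ^ (k + 1) ∈ spectrum ℂ A :=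
          (spec_corr M p δ hunif hκ hκδ ν hν0).mp hν
        have h1 : ‖ν‖ ^ (k + 1) ≤ r := by
          rw [← norm_pow]
          exact le_csSup hSfin.bddAbove ⟨ν ^ (k + 1), hν1, rfl⟩
        by_contra h
        push_neg at h
        have : (1 : ℝ) ≤ ‖ν‖ ^ (k + 1) := one_le_pow₀ h
        exact absurd (lt_of_le_of_lt (le_trans this h1) hρ1) (lt_irrefl 1)
    have : specRad B ∈ T := hTne.csSup_mem hTfin
    exact hTlt _ this
end
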